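/- Let v₁, …, v_k ∈ D(ℝ)^(n) be tropically independent vectors and let v ∈ D(ℝ)^(n) be a tangible vector that is not the zero vector. Then there exist indices i₁ < ⋯ < i_{k−1} in {1,…,k} such that the vectors v_{i₁}, …, v_{i_{k−1}}, v are tropically independent. -/

import Mathlib

noncomputable section

/-- The extended tropical semifield `D(ℝ)`: `bot` is `-∞`; `nb g r` is the element of
underlying value `r : ℝ`, ghost if `g = true`, tangible if `g = false`. -/
inductive DR : Type where
  | bot : DR
  | nb : Bool → ℝ → DR

namespace DR

/-- Supertropical addition on `D(ℝ)`. -/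
def add : DR → DR → DR
  | bot, y => y
  | x, bot => x
  | nb b r, nb c s => if r < s then nb c s else if s < r then nb b r else nb true r

/-- Supertropical multiplication on `D(ℝ)`. -/
def mul : DR → DR → DR
  | bot, _ => bot
  | _, bot => bot
  | nb b r, nb c s => nb (b || c) (r + s)

theorem bot_add (x : DR) : add bot x = x := by cases x <;> rfl

theorem add_bot (x : DR) : add x bot = x := by cases x <;> rfl

theorem bot_mul (x : DR) : mul bot x = bot := by cases x <;> rfl

theorem mul_bot (x : DR) : mul x bot = bot := by cases x <;> rfl

theorem add_comm' (x y : DR) : add x y = add y x := by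
  cases x <;> cases y <;> (try rfl)
  simp only [add]
  split_ifs <;>
    first
      | rfl
      | (exfalso; linarith)
      | (congr 1 <;> first | rfl | linarith)

theorem add_assoc' (x y z : DR) : add (add x y) z = add x (add y z) := by
  cases x with
  | bot => rw [bot_add, bot_add]
  | nb b r =>
    cases y with
    | bot => rw [add_bot, bot_add]
    | nb c s =>
      cases z with
      | bot => rw [add_bot, add_bot]
      | nb d t =>
        simp only [add]
        split_ifs <;>
          simp only [add] <;>
          (try split_ifs) <;>
          first
            | rfl
            | (exfalso; linarith)
            | (congr 1 <;> first | rfl | linarith)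

theorem mul_comm' (x y : DR) : mul x y = mul y x := by
  cases x <;> cases y <;> (try rfl)
  simp [mul, Bool.or_comm, add_comm]

theorem mul_assoc' (x y z : DR) : mul (mul x y) z = mul x (mul y z) := by
  cases x <;> cases y <;> cases z <;> (try rfl) <;>
    simp [mul, Bool.or_assoc, add_assoc]

theorem one_mul' (x : DR) : mul (nb false 0) x = x := by
  cases x <;> simp [mul]

theorem left_distrib' (x y z : DR) : mul x (add y z) = add (mul x y) (mul x z) := by
  cases x with
  | bot => simp [bot_mul, bot_add]
  | nb b r =>
    cases y with
    | bot => simp [bot_add, mul_bot]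
    | nb c s =>
      cases z with
      | bot => simp [add_bot, mul_bot]
      | nb d t =>
        simp only [mul, add]
        split_ifs <;>
          simp only [mul, add, Bool.or_true, Bool.true_or] <;>
          (try split_ifs) <;>
          first
            | rfl
            | (exfalso; linarith)
            | (congr 1 <;> first | rfl | linarith)

theorem right_distrib' (x y z : DR) : mul (add x y) z = add (mul x z) (mul y z) := by
  rw [mul_comm' (add x y) z, left_distrib', mul_comm' z x, mul_comm' z y]

instance : Add DR := ⟨add⟩
instance : Zero DR := ⟨bot⟩
instance : Mul DR := ⟨mul⟩
instance : One DR := ⟨nb false 0⟩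

instance : AddCommMonoid DR where
  add := add
  add_assoc := add_assoc'
  zero := bot
  zero_add := bot_add
  add_zero := add_bot
  add_comm := add_comm'
  nsmul := nsmulRec

instance : CommMonoid DR where
  mul := mul
  mul_assoc := mul_assoc'
  one := nb false 0
  one_mul := one_mul'
  mul_one := fun x => by show mul x (nb false 0) = x; rw [mul_comm']; exact one_mul' x
  mul_comm := mul_comm'
  npow := npowRec

instance : CommSemiring DR where
  __ := (inferInstance : AddCommMonoid DR)
  __ := (inferInstance : CommMonoid DR)
  left_distrib := left_distrib'
  right_distrib := right_distrib'
  zero_mul := bot_mul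
  mul_zero := mul_bot

/-- The ghost ideal `G₀ = ℝ^ν ∪ {-∞}` as a predicate. -/
def IsGhost : DR → Prop
  | bot => True
  | nb b _ => b = true

/-- The tangible elements `T = ℝ` as a predicate. -/
def Tangible : DR → Prop
  | nb false _ => True
  | _ => False

/-- Membership in `T ∪ {-∞}`. -/
def TangibleOrBot (x : DR) : Prop := x = bot ∨ Tangible x

/-- The underlying value in `ℝ ∪ {-∞}`. -/
def val : DR → WithBot ℝ
  | bot => ⊥
  | nb _ r => (r : WithBot ℝ)

/-- `x ≤_ν y` : comparison of underlying values, `-∞` smallest. -/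
def nuLe (x y : DR) : Prop := val x ≤ val y

/-- `x <_ν y` : strict comparison of underlying values, `-∞` smallest. -/
def nuLt (x y : DR) : Prop := val x < val y

/-- The tangible lift `x̂` of `x` (with `hat bot = bot`). -/
def hat : DR → DR
  | bot => bot
  | nb _ r => nb false r

/-- The ghost map `ν`. -/
def nu : DR → DR
  | bot => bot
  | nb _ r => nb true r

/-- The ghost-surpass relation `x ⊨ y` on `D(ℝ)`. -/
def GhostSurp (x y : DR) : Prop := ∃ c : DR, IsGhost c ∧ x = y + c

end DR

open DR

/-- A vector in `D(ℝ)^(n)` lies in the ghost submodule `G₀^(n)`. -/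
def GhostVec {n : ℕ} (v : Fin n → DR) : Prop := ∀ j, IsGhost (v j)

/-- A tangible vector: all entries in `T ∪ {-∞}`. -/
def TangibleVec {n : ℕ} (v : Fin n → DR) : Prop := ∀ j, TangibleOrBot (v j)

/-- The ghost-surpass relation `v ⊨ w` on vectors. -/
def GhostSurpVec {n : ℕ} (v w : Fin n → DR) : Prop :=
  ∃ u : Fin n → DR, GhostVec u ∧ v = w + u

/-- A family of vectors is tropically dependent. -/
def TropDep {ι : Type*} [Fintype ι] {n : ℕ} (w : ι → Fin n → DR) : Prop :=
  ∃ I : Finset ι, I.Nonempty ∧ ∃ α : ι → DR, (∀ i ∈ I, Tangible (α i)) ∧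
    ∀ j : Fin n, IsGhost (∑ i ∈ I, α i * w i j)

/-- A family of vectors is tropically independent. -/
def TropIndep {ι : Type*} [Fintype ι] {n : ℕ} (w : ι → Fin n → DR) : Prop := ¬ TropDep w

/-- A set of vectors is tropically dependent. -/
def SetTropDep {n : ℕ} (S : Set (Fin n → DR)) : Prop :=
  ∃ I : Finset (Fin n → DR), ↑I ⊆ S ∧ I.Nonempty ∧
    ∃ α : (Fin n → DR) → DR, (∀ w ∈ I, Tangible (α w)) ∧
      ∀ j : Fin n, IsGhost (∑ w ∈ I, α w * w j)

/-- A set of vectors is tropically independent. -/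
def SetTropIndep {n : ℕ} (S : Set (Fin n → DR)) : Prop := ¬ SetTropDep S

/-- A d-base of `V`: a maximal tropically independent subset of `V`. -/
def IsDBase {n : ℕ} (V S : Set (Fin n → DR)) : Prop :=
  S ⊆ V ∧ SetTropIndep S ∧ ∀ S', S ⊆ S' → S' ⊆ V → SetTropIndep S' → S' = S

/-- The rank of `V`: the maximal number of elements of a d-base of `V`. -/
noncomputable def trank {n : ℕ} (V : Set (Fin n → DR)) : ℕ :=
  sSup {m | ∃ S, IsDBase V S ∧ S.Finite ∧ S.ncard = m}

/-- `v` is tropically spanned by `S`. -/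
def SpannedBy {n : ℕ} (S : Set (Fin n → DR)) (v : Fin n → DR) : Prop :=
  ∃ I : Finset (Fin n → DR), ↑I ⊆ S ∧ I.Nonempty ∧
    ∃ α : (Fin n → DR) → DR, (∀ w ∈ I, Tangible (α w)) ∧
      GhostSurpVec v (fun j => ∑ w ∈ I, α w * w j)

/-- The tropical determinant (permanent) of a square matrix over `D(ℝ)`. -/
noncomputable def tperm {k : ℕ} (A : Matrix (Fin k) (Fin k) DR) : DR :=
  ∑ π : Equiv.Perm (Fin k), ∏ i, A (π i) i

namespace DR

theorem zero_def : (0 : DR) = bot := rfl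

theorem tangible_iff (x : DR) : Tangible x ↔ ∃ r : ℝ, x = nb false r := by
  cases x with
  | bot => simp [Tangible]
  | nb b r =>
    cases b <;> simp [Tangible] <;> (try exact ⟨r, rfl⟩)

theorem not_isGhost_iff (x : DR) : ¬ IsGhost x ↔ ∃ r : ℝ, x = nb false r := by
  cases x with
  | bot => simp [IsGhost]
  | nb b r =>
    cases b <;> simp [IsGhost] <;> (try exact ⟨r, rfl⟩)

theorem Tangible.not_isGhost {x : DR} (h : Tangible x) : ¬ IsGhost x := by
  rw [not_isGhost_iff]; rw [tangible_iff] at h; exact h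

theorem val_add (x y : DR) : val (x + y) = max (val x) (val y) := by
  show val (add x y) = _
  cases x with
  | bot => rw [bot_add]; simp [val]
  | nb b r =>
    cases y with
    | bot => rw [add_bot]; simp [val]
    | nb c s =>
      simp only [add, val]
      split_ifs with h1 h2 <;> simp only [val]
      · rw [max_eq_right]; exact_mod_cast h1.le
      · rw [max_eq_left]; exact_mod_cast h2.le
      · have : r = s := le_antisymm (not_lt.1 h2) (not_lt.1 h1)
        subst this; simp

theorem val_mul (x y : DR) : val (x * y) = val x + val y := by
  show val (mul x y) = _
  cases x with
  | bot => rw [bot_mul]; simp [val]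
  | nb b r =>
    cases y with
    | bot => rw [mul_bot]; simp [val]
    | nb c s => simp [mul, val]

theorem isGhost_add {x y : DR} (hx : IsGhost x) (hy : IsGhost y) : IsGhost (x + y) := by
  show IsGhost (add x y)
  cases x with
  | bot => rwa [bot_add]
  | nb b r =>
    cases y with
    | bot => rwa [add_bot]
    | nb c s =>
      simp only [IsGhost] at hx hy
      simp only [add]
      split_ifs <;> simp [IsGhost, hx, hy]

theorem add_eq_left {x y : DR} (h : val y < val x) : x + y = x := by
  show add x y = x
  cases x with
  | bot => simp [val] at h
  | nb b r =>
    cases y with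
    | bot => rw [add_bot]
    | nb c s =>
      simp only [val, WithBot.coe_lt_coe] at h
      simp only [add]
      rw [if_neg (by exact not_lt.2 h.le), if_pos h]

theorem isGhost_mul (x : DR) {y : DR} (hy : IsGhost y) : IsGhost (x * y) := by
  show IsGhost (mul x y)
  cases x with
  | bot => rw [bot_mul]; trivial
  | nb b r =>
    cases y with
    | bot => rw [mul_bot]; trivial
    | nb c s =>
      simp only [IsGhost] at hy
      simp [mul, IsGhost, hy]

theorem mul_tangible {x y : DR} (hx : Tangible x) (hy : Tangible y) : Tangible (x * y) := by
  rw [tangible_iff] at hx hy ⊢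
  obtain ⟨r, rfl⟩ := hx; obtain ⟨s, rfl⟩ := hy
  exact ⟨r + s, rfl⟩

theorem not_isGhost_mul {x y : DR} (h : ¬ IsGhost (x * y)) :
    ¬ IsGhost x ∧ ¬ IsGhost y := by
  rw [not_isGhost_iff] at h
  obtain ⟨u, hu⟩ := h
  rw [not_isGhost_iff, not_isGhost_iff]
  cases x with
  | bot => rw [show (bot * y : DR) = bot from bot_mul y] at hu; exact absurd hu (by simp)
  | nb b r =>
    cases y with
    | bot => rw [show (nb b r * bot : DR) = bot from mul_bot _] at hu; exact absurd hu (by simp)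
    | nb c s =>
      have : (mul (nb b r) (nb c s)) = nb false u := hu
      simp only [mul, nb.injEq] at this
      obtain ⟨hbc, -⟩ := this
      rcases Bool.or_eq_false_iff.1 hbc with ⟨hb, hc⟩
      subst hb; subst hc
      exact ⟨⟨r, rfl⟩, ⟨s, rfl⟩⟩

theorem ghost_add_tangible {a b : DR} (ha : TangibleOrBot a) (hb : Tangible b)
    (h : IsGhost (a + b)) : a = b := by
  rw [tangible_iff] at hb
  obtain ⟨s, rfl⟩ := hb
  rcases ha with rfl | ha
  · rw [show bot + nb false s = nb false s from bot_add _] at h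
    exact absurd h (by simp [IsGhost])
  · rw [tangible_iff] at ha
    obtain ⟨r, rfl⟩ := ha
    have : add (nb false r) (nb false s) = _ := rfl
    show _ = _
    by_cases h1 : r < s
    · exfalso
      have : (nb false r) + (nb false s) = nb false s := by
        show add _ _ = _; simp [add, h1]
      rw [this] at h; exact absurd h (by simp [IsGhost])
    by_cases h2 : s < r
    · exfalso
      have : (nb false r) + (nb false s) = nb false r := by
        show add _ _ = _; simp [add, h2, not_lt.2 h2.le]
      rw [this] at h; exact absurd h (by simp [IsGhost])
    · have : r = s := le_antisymm (not_lt.1 h2) (not_lt.1 h1)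
      rw [this]

theorem val_hat (x : DR) : val (hat x) = val x := by
  cases x <;> simp [hat, val]

theorem hat_tangible {x : DR} (h : x ≠ bot) : Tangible (hat x) := by
  cases x with
  | bot => exact absurd rfl h
  | nb b r => simp [hat, Tangible]

theorem val_eq_bot_iff (x : DR) : val x = ⊥ ↔ x = bot := by
  cases x <;> simp [val]

end DR
namespace DR

variable {ι : Type*} [DecidableEq ι]

theorem val_sum_lt {s : Finset ι} {g : ι → DR} {c : ℝ}
    (h : ∀ j ∈ s, val (g j) < (c : WithBot ℝ)) :
    val (∑ j ∈ s, g j) < (c : WithBot ℝ) := by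
  classical
  induction s using Finset.induction_on with
  | empty => simp [zero_def, val]
  | @insert a s ha ih =>
    rw [Finset.sum_insert ha, val_add]
    exact max_lt (h a (Finset.mem_insert_self a s))
      (ih fun j hj => h j (Finset.mem_insert_of_mem hj))

theorem val_le_val_sum {s : Finset ι} {g : ι → DR} {j : ι} (hj : j ∈ s) :
    val (g j) ≤ val (∑ i ∈ s, g i) := by
  classical
  induction s using Finset.induction_on with
  | empty => simp at hj
  | @insert a s ha ih =>
    rw [Finset.sum_insert ha, val_add]
    rcases Finset.mem_insert.1 hj with rfl | hj
    · exact le_max_left _ _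
    · exact le_trans (ih hj) (le_max_right _ _)

theorem exists_val_eq {s : Finset ι} {g : ι → DR} (hs : s.Nonempty) :
    ∃ p ∈ s, val (∑ j ∈ s, g j) = val (g p) := by
  classical
  induction s using Finset.induction_on with
  | empty => exact absurd hs (by simp)
  | @insert a s ha ih =>
    rw [Finset.sum_insert ha, val_add]
    rcases s.eq_empty_or_nonempty with rfl | hs'
    · exact ⟨a, Finset.mem_insert_self a _, by simp [zero_def, val]⟩
    · obtain ⟨p, hp, hvp⟩ := ih hs'
      rcases le_total (val (g a)) (val (∑ j ∈ s, g j)) with hle | hle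
      · exact ⟨p, Finset.mem_insert_of_mem hp, by rw [max_eq_right hle, hvp]⟩
      · exact ⟨a, Finset.mem_insert_self a _, by rw [max_eq_left hle]⟩

theorem not_isGhost_add {x y : DR} (h : ¬ IsGhost (x + y)) :
    (¬ IsGhost x ∧ val y < val x) ∨ (¬ IsGhost y ∧ val x < val y) := by
  cases x with
  | bot =>
    right
    rw [show (bot + y : DR) = y from bot_add y] at h
    refine ⟨h, ?_⟩
    rw [not_isGhost_iff] at h
    obtain ⟨r, rfl⟩ := h
    exact WithBot.bot_lt_coe r
  | nb b r =>
    cases y with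
    | bot =>
      left
      rw [show (nb b r + bot : DR) = nb b r from add_bot _] at h
      exact ⟨h, WithBot.bot_lt_coe r⟩
    | nb c s =>
      have hadd : (nb b r + nb c s : DR) = add (nb b r) (nb c s) := rfl
      rw [hadd] at h
      simp only [add] at h
      split_ifs at h with h1 h2
      · right; exact ⟨h, by simpa [val] using h1⟩
      · left; exact ⟨h, by simpa [val] using h2⟩
      · exact absurd rfl h

theorem not_ghost_sum_dominant {s : Finset ι} {g : ι → DR}
    (h : ¬ IsGhost (∑ j ∈ s, g j)) :
    ∃ j₀ ∈ s, ¬ IsGhost (g j₀) ∧ val (g j₀) = val (∑ j ∈ s, g j) ∧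
      ∀ j ∈ s, j ≠ j₀ → val (g j) < val (g j₀) := by
  classical
  induction s using Finset.induction_on with
  | empty => exact absurd trivial (by simpa [zero_def, IsGhost] using h)
  | @insert a s ha ih =>
    rw [Finset.sum_insert ha] at h ⊢
    rcases not_isGhost_add h with ⟨hga, hlt⟩ | ⟨hgs, hlt⟩
    · refine ⟨a, Finset.mem_insert_self a _, hga, ?_, ?_⟩
      · rw [val_add, max_eq_left hlt.le]
      · intro j hj hne
        rcases Finset.mem_insert.1 hj with rfl | hj
        · exact absurd rfl hne
        · exact lt_of_le_of_lt (val_le_val_sum hj) hlt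
    · obtain ⟨j₀, hj₀, hg₀, hv₀, hdom⟩ := ih hgs
      refine ⟨j₀, Finset.mem_insert_of_mem hj₀, hg₀, ?_, ?_⟩
      · rw [val_add, max_eq_right hlt.le, hv₀]
      · intro j hj hne
        rcases Finset.mem_insert.1 hj with rfl | hj
        · rw [← hv₀] at hlt; exact hlt
        · exact hdom j hj hne

end DR
open DR

theorem tropdep_reindex {n : ℕ} {ι κ : Type*} [Fintype ι] [Fintype κ]
    (u : ι → Fin n → DR) (F : κ → Fin n → DR) (I : Finset κ) (hne : I.Nonempty)
    (g : κ → ι) (hinj : ∀ t₁ ∈ I, ∀ t₂ ∈ I, g t₁ = g t₂ → t₁ = t₂)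
    (hF : ∀ t ∈ I, F t = u (g t))
    (α : κ → DR) (ht : ∀ t ∈ I, Tangible (α t))
    (hg : ∀ j, IsGhost (∑ t ∈ I, α t * F t j)) : TropDep u := by
  classical
  refine ⟨I.image g, hne.image g,
    fun j => if h : ∃ t, t ∈ I ∧ g t = j then α h.choose else bot, ?_, ?_⟩
  · intro x hx
    obtain ⟨t, htI, rfl⟩ := Finset.mem_image.1 hx
    dsimp only
    rw [dif_pos (⟨t, htI, rfl⟩ : ∃ t', t' ∈ I ∧ g t' = g t)]
    exact ht _ (⟨t, htI, rfl⟩ : ∃ t', t' ∈ I ∧ g t' = g t).choose_spec.1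
  · intro m
    have hsum : (∑ x ∈ I.image g,
        (if h : ∃ t, t ∈ I ∧ g t = x then α h.choose else bot) * u x m)
        = ∑ t ∈ I, α t * F t m := by
      rw [Finset.sum_image hinj]
      refine Finset.sum_congr rfl fun t htI => ?_
      have hex : ∃ t', t' ∈ I ∧ g t' = g t := ⟨t, htI, rfl⟩
      rw [dif_pos hex, hF t htI]
      have hch := hex.choose_spec
      rw [hinj _ hch.1 _ htI hch.2]
    rw [hsum]
    exact hg m

/-- Given tropically independent `v₁, …, v_k` and a tangible nonzero vector `v`,
some `k-1` of the `vᵢ` together with `v` are tropically independent. -/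
theorem exchange_with_tangible_vector (n k : ℕ) (w : Fin k → Fin n → DR)
    (hw : TropIndep w) (v : Fin n → DR) (hv : TangibleVec v) (hv0 : v ≠ 0) :
    ∃ f : Fin (k - 1) → Fin k, StrictMono f ∧
      TropIndep (Fin.snoc (fun i => w (f i)) v : Fin (k - 1 + 1) → Fin n → DR) := by
  classical
  obtain ⟨m₀, hm₀⟩ : ∃ m, v m ≠ 0 := by
    by_contra hc; push_neg at hc; exact hv0 (funext hc)
  have hvm₀ : Tangible (v m₀) := by
    rcases hv m₀ with h | h
    · exact absurd h hm₀
    · exact h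
  rcases k with _ | s
  · -- k = 0 : the single family (v) is independent
    refine ⟨Fin.elim0, fun a => a.elim0, ?_⟩
    rintro ⟨I, hne, α, htan, hg⟩
    obtain ⟨t, ht⟩ := hne
    have hIt : I = {t} := Finset.eq_singleton_iff_unique_mem.2
      ⟨ht, fun x _ => Fin.ext (by have h1 := x.isLt; have h2 := t.isLt; omega)⟩
    have hgm := hg m₀
    rw [hIt, Finset.sum_singleton] at hgm
    have htl : t = Fin.last 0 := Fin.ext (by have h1 := t.isLt; simp only [Fin.val_last]; omega)
    rw [htl, Fin.snoc_last] at hgm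
    have : Tangible (α t * v m₀) := mul_tangible (htan t ht) hvm₀
    rw [htl] at this
    exact this.not_isGhost hgm
  · -- k = s + 1
    by_contra hcon
    push_neg at hcon
    have hdep : ∀ i : Fin (s + 1),
        TropDep (Fin.snoc (fun t => w (i.succAbove t)) v : Fin (s + 1) → Fin n → DR) := by
      intro i
      have := hcon i.succAbove (Fin.strictMono_succAbove i)
      simpa [TropIndep, not_not] using this
    have key : ∀ i : Fin (s + 1), ∃ a : Fin (s + 1) → DR,
        (∀ j, a j = bot ∨ Tangible (a j)) ∧ a i = bot ∧
        (∀ m, IsGhost (v m + ∑ j, a j * w j m)) := by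
      intro i
      obtain ⟨I, hne, α, htan, hg⟩ := hdep i
      set F : Fin (s + 1) → Fin n → DR := Fin.snoc (fun t => w (i.succAbove t)) v with hFdef
      set G : Fin (s + 1) → Fin (s + 1) :=
        fun t => if h : t = Fin.last s then i else i.succAbove (t.castPred h) with hGdef
      have hGne : ∀ (t : Fin (s + 1)) (h : t ≠ Fin.last s),
          G t = i.succAbove (t.castPred h) := by
        intro t h; rw [hGdef]; exact dif_neg h
      have hGinj : ∀ t₁ t₂, t₁ ≠ Fin.last s → t₂ ≠ Fin.last s → G t₁ = G t₂ → t₁ = t₂ := by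
        intro t₁ t₂ h₁ h₂ hEq
        rw [hGne t₁ h₁, hGne t₂ h₂] at hEq
        have h3 := Fin.succAbove_right_injective (p := i) hEq
        have h4 := congrArg Fin.castSucc h3
        rwa [Fin.castSucc_castPred, Fin.castSucc_castPred] at h4
      have hFG : ∀ (t : Fin (s + 1)) (h : t ≠ Fin.last s), F t = w (G t) := by
        intro t h
        rw [hGne t h, hFdef]
        conv_lhs => rw [← Fin.castSucc_castPred t h]
        exact Fin.snoc_castSucc _ _ _
      by_cases hlast : Fin.last s ∈ I
      · -- dependence uses v ; normalize
        obtain ⟨r, hr⟩ := (tangible_iff _).1 (htan _ hlast)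
        set cinv : DR := nb false (-r) with hcinvdef
        have hcinv : cinv * α (Fin.last s) = 1 := by
          rw [hr]
          show mul (nb false (-r)) (nb false r) = nb false 0
          simp [mul, neg_add_cancel]
        set a : Fin (s + 1) → DR := fun j =>
          if h : ∃ t, t ∈ I.erase (Fin.last s) ∧ G t = j then cinv * α h.choose else bot
          with hadef
        have ha_apply : ∀ j, a j =
            if h : ∃ t, t ∈ I.erase (Fin.last s) ∧ G t = j then cinv * α h.choose else bot :=
          fun _ => rfl
        have haT : ∀ j, a j = bot ∨ Tangible (a j) := by
          intro j
          rw [ha_apply]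
          by_cases h : ∃ t, t ∈ I.erase (Fin.last s) ∧ G t = j
          · right
            rw [dif_pos h]
            exact mul_tangible (by trivial) (htan _ (Finset.mem_of_mem_erase h.choose_spec.1))
          · left; rw [dif_neg h]
        have hai : a i = bot := by
          rw [ha_apply]
          apply dif_neg
          rintro ⟨t, htmem, hGt⟩
          have htne : t ≠ Fin.last s := Finset.ne_of_mem_erase htmem
          rw [hGne t htne] at hGt
          exact Fin.succAbove_ne i _ hGt
        refine ⟨a, haT, hai, ?_⟩
        intro m
        have h1 := hg m
        rw [← Finset.add_sum_erase I _ hlast] at h1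
        have h2 := isGhost_mul cinv h1
        rw [mul_add, ← mul_assoc, hcinv, one_mul, Finset.mul_sum] at h2
        have hFlast : F (Fin.last s) m = v m := by
          rw [hFdef]; exact congrFun (Fin.snoc_last _ _) m
        rw [hFlast] at h2
        have hsum : (∑ j, a j * w j m)
            = ∑ t ∈ I.erase (Fin.last s), cinv * (α t * F t m) := by
          rw [← Finset.sum_subset (Finset.subset_univ ((I.erase (Fin.last s)).image G))
            (fun j _ hj => ?_)]
          · rw [Finset.sum_image (fun t₁ h₁ t₂ h₂ =>
              hGinj t₁ t₂ (Finset.ne_of_mem_erase h₁) (Finset.ne_of_mem_erase h₂))]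
            refine Finset.sum_congr rfl fun t htm => ?_
            have hex : ∃ t', t' ∈ I.erase (Fin.last s) ∧ G t' = G t := ⟨t, htm, rfl⟩
            have hch := hex.choose_spec
            have hcht : hex.choose = t := hGinj _ _ (Finset.ne_of_mem_erase hch.1)
              (Finset.ne_of_mem_erase htm) hch.2
            rw [ha_apply, dif_pos hex]
            rw [hcht, ← hFG t (Finset.ne_of_mem_erase htm), mul_assoc]
          · -- j not in image : a j = bot
            have : ¬ ∃ t, t ∈ I.erase (Fin.last s) ∧ G t = j := by
              rintro ⟨t, htm, rfl⟩
              exact hj (Finset.mem_image_of_mem G htm)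
            rw [ha_apply, dif_neg this]
            exact zero_mul _
        rw [hsum]
        exact h2
      · -- dependence avoids v : contradicts independence of w
        exfalso
        apply hw
        refine tropdep_reindex w F I hne G
          (fun t₁ h₁ t₂ h₂ => hGinj t₁ t₂ (ne_of_mem_of_not_mem h₁ hlast)
            (ne_of_mem_of_not_mem h₂ hlast)) ?_ α htan hg
        exact fun t htI => hFG t (ne_of_mem_of_not_mem htI hlast)
    choose a H1 H2 H3 using key
    set γ : Fin (s + 1) → DR := fun j => hat (∑ i, a i j) with hγdef
    have hvalγ : ∀ j, val (γ j) = val (∑ i, a i j) := fun j => val_hat _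
    have hbound : ∀ i j, val (a i j) ≤ val (γ j) := by
      intro i j; rw [hvalγ]; exact val_le_val_sum (g := fun i' => a i' j) (Finset.mem_univ i)
    have claim : ∀ m, IsGhost (∑ j, γ j * w j m) := by
      intro m
      by_contra hng
      obtain ⟨j₀, -, hngj, hveq, hdom⟩ := not_ghost_sum_dominant hng
      obtain ⟨hgγ, hgw⟩ := not_isGhost_mul hngj
      obtain ⟨T₀, hT₀⟩ := (not_isGhost_iff _).1 hngj
      have hTval : val (γ j₀ * w j₀ m) = (T₀ : WithBot ℝ) := by rw [hT₀]; rfl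
      obtain ⟨p, -, hp⟩ := exists_val_eq (g := fun i => a i j₀) Finset.univ_nonempty
      have hpγ : val (a p j₀) = val (γ j₀) := by rw [hvalγ, hp]
      have hγ₀ne : γ j₀ ≠ bot := by
        intro hb; rw [hb] at hgγ; exact hgγ trivial
      have hap_t : Tangible (a p j₀) := by
        rcases H1 p j₀ with hb | ht
        · exfalso
          exact hγ₀ne ((val_eq_bot_iff _).1 (by rw [← hpγ, hb]; rfl))
        · exact ht
      have hwt : Tangible (w j₀ m) := (tangible_iff _).2 ((not_isGhost_iff _).1 hgw)
      have hmain_t : Tangible (a p j₀ * w j₀ m) := mul_tangible hap_t hwt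
      have hmain_val : val (a p j₀ * w j₀ m) = (T₀ : WithBot ℝ) := by
        rw [val_mul, hpγ, ← val_mul, hTval]
      have hbnd : ∀ i j, j ≠ j₀ → val (a i j * w j m) < (T₀ : WithBot ℝ) := by
        intro i j hne
        calc val (a i j * w j m) = val (a i j) + val (w j m) := val_mul _ _
          _ ≤ val (γ j) + val (w j m) := add_le_add (hbound i j) le_rfl
          _ = val (γ j * w j m) := (val_mul _ _).symm
          _ < val (γ j₀ * w j₀ m) := hdom j (Finset.mem_univ j) hne
          _ = _ := hTval
      have hxp : (∑ j, a p j * w j m) = a p j₀ * w j₀ m := by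
        rw [← Finset.add_sum_erase Finset.univ (fun j => a p j * w j m) (Finset.mem_univ j₀)]
        apply DR.add_eq_left
        rw [hmain_val]
        exact val_sum_lt fun j hj => hbnd p j (Finset.ne_of_mem_erase hj)
      have hvm : v m = a p j₀ * w j₀ m := by
        apply ghost_add_tangible (hv m) hmain_t
        have := H3 p m
        rwa [hxp] at this
      have hq := H3 j₀ m
      have hxq : val (∑ j, a j₀ j * w j m) < (T₀ : WithBot ℝ) := by
        apply val_sum_lt
        intro j _
        by_cases hje : j = j₀
        · subst hje
          rw [H2 j]
          rw [show (bot * w j m : DR) = bot from bot_mul _]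
          exact WithBot.bot_lt_coe T₀
        · exact hbnd j₀ j hje
      rw [add_eq_left (by rw [hvm, hmain_val]; exact hxq), hvm] at hq
      exact hmain_t.not_isGhost hq
    apply hw
    have hjne : ∃ j, γ j ≠ bot := by
      by_contra hall
      push_neg at hall
      have hzero : ∀ j, a 0 j = bot := by
        intro j
        have h := hbound 0 j
        rw [hall j] at h
        simp only [val] at h
        exact (val_eq_bot_iff _).1 (le_bot_iff.1 h)
      have hg0 := H3 0 m₀
      have hsum0 : (∑ j, a 0 j * w j m₀) = 0 := by
        apply Finset.sum_eq_zero
        intro j _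
        rw [hzero j]
        exact zero_mul _
      rw [hsum0, add_zero] at hg0
      exact hvm₀.not_isGhost hg0
    obtain ⟨j₁, hj₁⟩ := hjne
    refine ⟨Finset.univ.filter (fun j => γ j ≠ bot), ⟨j₁, by simp [hj₁]⟩, γ, ?_, ?_⟩
    · intro j hj
      rw [Finset.mem_filter] at hj
      have hne' : (∑ i, a i j) ≠ bot := by
        intro hb
        apply hj.2
        have hγa : γ j = hat (∑ i, a i j) := rfl
        rw [hγa, hb]
        rfl
      exact hat_tangible hne'
    · intro m
      have hss : (∑ j ∈ Finset.univ.filter (fun j => γ j ≠ bot), γ j * w j m)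
          = ∑ j, γ j * w j m := by
        apply Finset.sum_subset (Finset.filter_subset _ _)
        intro j _ hj
        have hjb : γ j = bot := by
          by_contra hne
          exact hj (Finset.mem_filter.2 ⟨Finset.mem_univ j, hne⟩)
        rw [hjb]
        exact zero_mul _
      rw [hss]
      exact claim m
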